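/- (Recovery of the true quadratic coefficients.) Assume conditions (C1) and (C2), the a_min bound (Eq. 13) with 0 < a_min ≤ a_max, and the self-map condition (C3): a_min ≤ F_i(a) ≤ a_max for every a ∈ B and every i. Suppose the true coefficient vector a ∈ B (with all a_g > 0) together with some vector b ∈ ℝ^n satisfies, for every i, the two stationarity equations 2·a_i·(Pβ_i − Σ_{g≠i} (λβ_{i,g} − b_g)/(2 a_g)) + b_i − λβ_{i,i} = 0 and 2·a_i·(Pα_i − Σ_{g≠i} (λα_{i,g} − b_g)/(2 a_g)) + b_i − λα_{i,i} = 0. Then a is the unique fixed point of F in B, and for every initial vector a⁰ ∈ B the MFPI iterates a^{k+1} = F(a^k) converge to the true coefficient vector a. -/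

import Mathlib

/-- Denominator `D_i(a)` of the MFPI map. -/
noncomputable def Dden (n : ℕ) (Pβ Pα : Fin n → ℝ) (lβ lα : Fin n → Fin n → ℝ)
    (a : Fin n → ℝ) (i : Fin n) : ℝ :=
  Pβ i - Pα i + ∑ g ∈ Finset.univ.erase i, (lα i g - lβ i g) / (2 * a g)

/-- MFPI map `F_i(a)`. -/
noncomputable def Fmfpi (n : ℕ) (Pβ Pα : Fin n → ℝ) (lβ lα : Fin n → Fin n → ℝ)
    (a : Fin n → ℝ) (i : Fin n) : ℝ :=
  (lβ i i - lα i i) / (2 * Dden n Pβ Pα lβ lα a i)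

/-- Lower envelope for the denominator over the box. -/
noncomputable def Dmin (n : ℕ) (Pβ Pα : Fin n → ℝ) (lβ lα : Fin n → Fin n → ℝ)
    (amin amax : ℝ) (i : Fin n) : ℝ :=
  Pβ i - Pα i + ∑ g ∈ Finset.univ.erase i,
    (lα i g - lβ i g) / (2 * (if 0 ≤ lα i g - lβ i g then amax else amin))

lemma Dmin_pos_and_sq (n : ℕ) (Pβ Pα : Fin n → ℝ) (lβ lα : Fin n → Fin n → ℝ)
    (amin amax : ℝ) (hamin : 0 < amin) (hamax : 0 < amax) (i : Fin n)
    (hc : 0 < lβ i i - lα i i) (hP : 0 < Pβ i - Pα i)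
    (h13 : (Real.sqrt ((lβ i i - lα i i) *
          ∑ g ∈ Finset.univ.erase i, |lα i g - lβ i g|)
        - ∑ g ∈ (Finset.univ.erase i).filter (fun g => lα i g - lβ i g < 0),
            (lα i g - lβ i g))
      / (2 * (Pβ i - Pα i)
        + ∑ g ∈ (Finset.univ.erase i).filter (fun g => 0 ≤ lα i g - lβ i g),
            (lα i g - lβ i g) / amax)
      < amin) :
    0 < Dmin n Pβ Pα lβ lα amin amax i ∧
    (lβ i i - lα i i) * (∑ g ∈ Finset.univ.erase i, |lα i g - lβ i g|)
      < (2 * amin * Dmin n Pβ Pα lβ lα amin amax i) ^ 2 := by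
  set E := Finset.univ.erase i with hE
  set N := ∑ g ∈ E.filter (fun g => lα i g - lβ i g < 0), (lα i g - lβ i g) with hN
  set P := ∑ g ∈ E.filter (fun g => 0 ≤ lα i g - lβ i g), (lα i g - lβ i g) with hP2
  have hPnn : 0 ≤ P := Finset.sum_nonneg fun g hg => (Finset.mem_filter.1 hg).2
  have hsum_div : ∑ g ∈ E.filter (fun g => 0 ≤ lα i g - lβ i g), (lα i g - lβ i g) / amax
      = P / amax := by rw [hP2, Finset.sum_div]
  rw [hsum_div] at h13
  have hdenom : 0 < 2 * (Pβ i - Pα i) + P / amax := by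
    have := div_nonneg hPnn hamax.le; linarith
  have h13' : Real.sqrt ((lβ i i - lα i i) * ∑ g ∈ E, |lα i g - lβ i g|) - N
      < amin * (2 * (Pβ i - Pα i) + P / amax) := (div_lt_iff₀ hdenom).1 h13
  have hsplit : ∑ g ∈ E, (lα i g - lβ i g) / (2 * (if 0 ≤ lα i g - lβ i g then amax else amin))
      = P / (2 * amax) + N / (2 * amin) := by
    rw [← Finset.sum_filter_add_sum_filter_not E (fun g => 0 ≤ lα i g - lβ i g)]
    congr 1
    · rw [hP2, Finset.sum_div]
      exact Finset.sum_congr rfl fun g hg => by rw [if_pos (Finset.mem_filter.1 hg).2]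
    · rw [hN, Finset.sum_div]
      rw [show E.filter (fun g => lα i g - lβ i g < 0)
          = E.filter (fun g => ¬ 0 ≤ lα i g - lβ i g) from
        Finset.filter_congr (fun g _ => by simp [not_le])]
      exact Finset.sum_congr rfl fun g hg => by rw [if_neg (Finset.mem_filter.1 hg).2]
  have heq : amin * (2 * (Pβ i - Pα i) + P / amax) + N
      = 2 * amin * Dmin n Pβ Pα lβ lα amin amax i := by
    rw [Dmin, ← hE, hsplit]
    field_simp
    ring
  have hlt : Real.sqrt ((lβ i i - lα i i) * ∑ g ∈ E, |lα i g - lβ i g|)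
      < 2 * amin * Dmin n Pβ Pα lβ lα amin amax i := by linarith
  have hsq0 : (0:ℝ) ≤ Real.sqrt ((lβ i i - lα i i) * ∑ g ∈ E, |lα i g - lβ i g|) :=
    Real.sqrt_nonneg _
  have hDpos : 0 < Dmin n Pβ Pα lβ lα amin amax i := by nlinarith
  refine ⟨hDpos, ?_⟩
  have hnn : 0 ≤ (lβ i i - lα i i) * ∑ g ∈ E, |lα i g - lβ i g| :=
    mul_nonneg hc.le (Finset.sum_nonneg fun g _ => abs_nonneg _)
  have h := pow_lt_pow_left₀ hlt hsq0 (n := 2) two_ne_zero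
  rwa [Real.sq_sqrt hnn] at h

lemma Dmin_le_Dden (n : ℕ) (Pβ Pα : Fin n → ℝ) (lβ lα : Fin n → Fin n → ℝ)
    (amin amax : ℝ) (hamin : 0 < amin) (i : Fin n)
    (x : Fin n → ℝ) (hx : ∀ g, amin ≤ x g ∧ x g ≤ amax) :
    Dmin n Pβ Pα lβ lα amin amax i ≤ Dden n Pβ Pα lβ lα x i := by
  have hxpos : ∀ g, 0 < x g := fun g => lt_of_lt_of_le hamin (hx g).1
  refine add_le_add le_rfl (Finset.sum_le_sum fun g _ => ?_)
  by_cases h : 0 ≤ lα i g - lβ i g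
  · rw [if_pos h]
    have h1 : 0 < 2 * x g := by linarith [hxpos g]
    have h2 : 0 < 2 * amax := by linarith [hamin.trans_le ((hx g).1.trans (hx g).2)]
    rw [div_le_div_iff₀ h2 h1]
    have : 2 * x g ≤ 2 * amax := by linarith [(hx g).2]
    nlinarith
  · rw [if_neg h]
    push_neg at h
    have h1 : 0 < 2 * x g := by linarith [hxpos g]
    have h2 : 0 < 2 * amin := by linarith
    rw [div_le_div_iff₀ h2 h1]
    have : 2 * amin ≤ 2 * x g := by linarith [(hx g).1]
    nlinarith

lemma coord_lip (n : ℕ) (Pβ Pα : Fin n → ℝ) (lβ lα : Fin n → Fin n → ℝ)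
    (amin amax : ℝ) (hamin : 0 < amin) (i : Fin n)
    (hc : 0 < lβ i i - lα i i)
    (Dm : ℝ) (hDm : 0 < Dm)
    (x y : Fin n → ℝ)
    (hx : ∀ g, amin ≤ x g ∧ x g ≤ amax) (hy : ∀ g, amin ≤ y g ∧ y g ≤ amax)
    (hDx : Dm ≤ Dden n Pβ Pα lβ lα x i) (hDy : Dm ≤ Dden n Pβ Pα lβ lα y i) :
    |Fmfpi n Pβ Pα lβ lα x i - Fmfpi n Pβ Pα lβ lα y i|
      ≤ (lβ i i - lα i i) * (∑ g ∈ Finset.univ.erase i, |lα i g - lβ i g|)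
        / (2 * amin * Dm) ^ 2 * dist x y := by
  have hxpos : ∀ g, 0 < x g := fun g => lt_of_lt_of_le hamin (hx g).1
  have hypos : ∀ g, 0 < y g := fun g => lt_of_lt_of_le hamin (hy g).1
  have hDxpos : 0 < Dden n Pβ Pα lβ lα x i := hDm.trans_le hDx
  have hDypos : 0 < Dden n Pβ Pα lβ lα y i := hDm.trans_le hDy
  have hd0 : (0:ℝ) ≤ dist x y := dist_nonneg
  -- bound on |Dx - Dy|
  have hdiffD : Dden n Pβ Pα lβ lα x i - Dden n Pβ Pα lβ lα y i
      = ∑ g ∈ Finset.univ.erase i,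
          ((lα i g - lβ i g) / (2 * x g) - (lα i g - lβ i g) / (2 * y g)) := by
    simp only [Dden]
    rw [Finset.sum_sub_distrib]
    ring
  have hDbd : |Dden n Pβ Pα lβ lα x i - Dden n Pβ Pα lβ lα y i|
      ≤ (∑ g ∈ Finset.univ.erase i, |lα i g - lβ i g|) * (dist x y / (2 * amin ^ 2)) := by
    rw [hdiffD, Finset.sum_mul]
    refine (Finset.abs_sum_le_sum_abs _ _).trans (Finset.sum_le_sum fun g _ => ?_)
    have hxg := hxpos g; have hyg := hypos g
    have hrw : (lα i g - lβ i g) / (2 * x g) - (lα i g - lβ i g) / (2 * y g)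
        = (lα i g - lβ i g) * (y g - x g) / (2 * (x g * y g)) := by
      field_simp
    rw [hrw, abs_div, abs_mul, abs_of_pos (by positivity : (0:ℝ) < 2 * (x g * y g))]
    rw [mul_div_assoc]
    have hdg : |y g - x g| ≤ dist x y := by
      have h := dist_le_pi_dist y x g
      rw [Real.dist_eq] at h
      rwa [dist_comm] at h
    refine mul_le_mul_of_nonneg_left ?_ (abs_nonneg _)
    refine div_le_div₀ hd0 hdg (by positivity) ?_
    nlinarith [(hx g).1, (hy g).1]
  have hFd : Fmfpi n Pβ Pα lβ lα x i - Fmfpi n Pβ Pα lβ lα y i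
      = (lβ i i - lα i i) * (Dden n Pβ Pα lβ lα y i - Dden n Pβ Pα lβ lα x i)
        / (2 * (Dden n Pβ Pα lβ lα x i * Dden n Pβ Pα lβ lα y i)) := by
    simp only [Fmfpi]
    field_simp
  rw [hFd, abs_div, abs_mul, abs_of_pos hc,
    abs_of_pos (by positivity : (0:ℝ) < 2 * (Dden n Pβ Pα lβ lα x i * Dden n Pβ Pα lβ lα y i)),
    abs_sub_comm]
  calc (lβ i i - lα i i) * |Dden n Pβ Pα lβ lα x i - Dden n Pβ Pα lβ lα y i|
        / (2 * (Dden n Pβ Pα lβ lα x i * Dden n Pβ Pα lβ lα y i))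
      ≤ (lβ i i - lα i i) * ((∑ g ∈ Finset.univ.erase i, |lα i g - lβ i g|)
          * (dist x y / (2 * amin ^ 2))) / (2 * (Dm * Dm)) := by
        refine div_le_div₀ (by positivity) (mul_le_mul_of_nonneg_left hDbd hc.le)
          (by positivity) ?_
        nlinarith
    _ = (lβ i i - lα i i) * (∑ g ∈ Finset.univ.erase i, |lα i g - lβ i g|)
        / (2 * amin * Dm) ^ 2 * dist x y := by
        field_simp

/-- Recovery of the true quadratic coefficients: under conditions (C1), (C2), the
    `a_min` bound (Eq. 13) and the self-map condition (C3), if the true coefficient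
    vector `a ∈ B` satisfies the stationarity equations at the base and auxiliary data
    points, then `a` is the unique fixed point of the MFPI map in `B`, and the MFPI
    iterates converge to `a` from any initial vector in `B`. -/
theorem mfpi_recovers_true_coefficients
    (n : ℕ) (hn : 1 ≤ n)
    (Pβ Pα : Fin n → ℝ) (lβ lα : Fin n → Fin n → ℝ)
    (amin amax : ℝ) (hamin : 0 < amin) (haminmax : amin ≤ amax)
    (hC1 : ∀ i, 0 < lβ i i - lα i i)
    (hC2 : ∀ i, 0 < Pβ i - Pα i)
    (hEq13 : ∀ i : Fin n,
      (Real.sqrt ((lβ i i - lα i i) *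
          ∑ g ∈ Finset.univ.erase i, |lα i g - lβ i g|)
        - ∑ g ∈ (Finset.univ.erase i).filter (fun g => lα i g - lβ i g < 0),
            (lα i g - lβ i g))
      / (2 * (Pβ i - Pα i)
        + ∑ g ∈ (Finset.univ.erase i).filter (fun g => 0 ≤ lα i g - lβ i g),
            (lα i g - lβ i g) / amax)
      < amin)
    (hC3 : ∀ a : Fin n → ℝ, (∀ g, amin ≤ a g ∧ a g ≤ amax) →
      ∀ i, amin ≤ Fmfpi n Pβ Pα lβ lα a i ∧ Fmfpi n Pβ Pα lβ lα a i ≤ amax)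
    (a b : Fin n → ℝ)
    (hapos : ∀ g, 0 < a g)
    (haB : ∀ g, amin ≤ a g ∧ a g ≤ amax)
    (hβ : ∀ i, 2 * a i * (Pβ i - ∑ g ∈ Finset.univ.erase i, (lβ i g - b g) / (2 * a g))
            + b i - lβ i i = 0)
    (hα : ∀ i, 2 * a i * (Pα i - ∑ g ∈ Finset.univ.erase i, (lα i g - b g) / (2 * a g))
            + b i - lα i i = 0) :
    (fun i => Fmfpi n Pβ Pα lβ lα a i) = a ∧
    (∀ a' : Fin n → ℝ, (∀ g, amin ≤ a' g ∧ a' g ≤ amax) →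
      (fun i => Fmfpi n Pβ Pα lβ lα a' i) = a' → a' = a) ∧
    (∀ a0 : Fin n → ℝ, (∀ g, amin ≤ a0 g ∧ a0 g ≤ amax) →
      Filter.Tendsto
        (fun k => (fun x i => Fmfpi n Pβ Pα lβ lα x i)^[k] a0)
        Filter.atTop (nhds a)) := by
  haveI : Nonempty (Fin n) := ⟨⟨0, hn⟩⟩
  have hamax : 0 < amax := hamin.trans_le haminmax
  have hkey := fun i => Dmin_pos_and_sq n Pβ Pα lβ lα amin amax hamin hamax i
    (hC1 i) (hC2 i) (hEq13 i)
  -- contraction constants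
  set Kf : Fin n → ℝ := fun i =>
    (lβ i i - lα i i) * (∑ g ∈ Finset.univ.erase i, |lα i g - lβ i g|)
      / (2 * amin * Dmin n Pβ Pα lβ lα amin amax i) ^ 2 with hKf
  have hKfnn : ∀ i, 0 ≤ Kf i := fun i => by
    have hD := (hkey i).1
    exact div_nonneg (mul_nonneg (hC1 i).le (Finset.sum_nonneg fun g _ => abs_nonneg _))
      (by positivity)
  have hKflt : ∀ i, Kf i < 1 := fun i => by
    have hD := (hkey i).1
    rw [hKf]
    exact div_lt_one (by positivity) |>.2 (hkey i).2
  set K : ℝ := Finset.univ.sup' Finset.univ_nonempty Kf with hK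
  have hK1 : K < 1 := (Finset.sup'_lt_iff _).2 fun i _ => hKflt i
  have hKnn : 0 ≤ K :=
    (hKfnn (Classical.arbitrary (Fin n))).trans
      (Finset.le_sup' Kf (Finset.mem_univ _))
  -- Lipschitz bound
  have hlip : ∀ x y : Fin n → ℝ, (∀ g, amin ≤ x g ∧ x g ≤ amax) →
      (∀ g, amin ≤ y g ∧ y g ≤ amax) →
      dist (fun i => Fmfpi n Pβ Pα lβ lα x i) (fun i => Fmfpi n Pβ Pα lβ lα y i)
        ≤ K * dist x y := by
    intro x y hx hy
    refine (dist_pi_le_iff (mul_nonneg hKnn dist_nonneg)).2 fun i => ?_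
    have hco := coord_lip n Pβ Pα lβ lα amin amax hamin i (hC1 i)
      (Dmin n Pβ Pα lβ lα amin amax i) (hkey i).1 x y hx hy
      (Dmin_le_Dden n Pβ Pα lβ lα amin amax hamin i x hx)
      (Dmin_le_Dden n Pβ Pα lβ lα amin amax hamin i y hy)
    rw [Real.dist_eq]
    refine hco.trans ?_
    exact mul_le_mul_of_nonneg_right (Finset.le_sup' Kf (Finset.mem_univ i)) dist_nonneg
  -- fixed point
  have hfix : (fun i => Fmfpi n Pβ Pα lβ lα a i) = a := by
    funext i
    have h1 := hβ i
    have h2 := hα i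
    have key : 2 * a i * Dden n Pβ Pα lβ lα a i = lβ i i - lα i i := by
      simp only [Dden]
      have hsum : ∑ g ∈ Finset.univ.erase i, (lα i g - lβ i g) / (2 * a g)
          = (∑ g ∈ Finset.univ.erase i, (lα i g - b g) / (2 * a g))
            - (∑ g ∈ Finset.univ.erase i, (lβ i g - b g) / (2 * a g)) := by
        rw [← Finset.sum_sub_distrib]
        exact Finset.sum_congr rfl fun g _ => by ring
      rw [hsum]
      linear_combination h1 - h2
    have hDpos : 0 < Dden n Pβ Pα lβ lα a i :=
      (hkey i).1.trans_le (Dmin_le_Dden n Pβ Pα lβ lα amin amax hamin i a haB)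
    simp only [Fmfpi]
    rw [div_eq_iff (by positivity : 2 * Dden n Pβ Pα lβ lα a i ≠ 0)]
    linear_combination -key
  refine ⟨hfix, ?_, ?_⟩
  · intro a' ha'B hfix'
    have h := hlip a' a ha'B haB
    rw [hfix', hfix] at h
    have hd : dist a' a = 0 := by nlinarith [dist_nonneg (x := a') (y := a)]
    exact eq_of_dist_eq_zero hd
  · intro a0 ha0B
    set G : (Fin n → ℝ) → Fin n → ℝ := fun x i => Fmfpi n Pβ Pα lβ lα x i with hG
    have hGa : G a = a := hfix
    have hstep : ∀ x : Fin n → ℝ, (∀ g, amin ≤ x g ∧ x g ≤ amax) →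
        (∀ g, amin ≤ G x g ∧ G x g ≤ amax) := fun x hx => hC3 x hx
    have hiter : ∀ k : ℕ, (∀ g, amin ≤ (G^[k] a0) g ∧ (G^[k] a0) g ≤ amax) ∧
        dist (G^[k] a0) a ≤ K ^ k * dist a0 a := by
      intro k
      induction k with
      | zero => simp only [Function.iterate_zero_apply, pow_zero, one_mul]
                exact ⟨ha0B, le_rfl⟩
      | succ k ih =>
        constructor
        · rw [Function.iterate_succ_apply']
          exact hstep _ ih.1
        · rw [Function.iterate_succ_apply']
          calc dist (G (G^[k] a0)) a = dist (G (G^[k] a0)) (G a) := by rw [hGa]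
            _ ≤ K * dist (G^[k] a0) a := hlip _ _ ih.1 haB
            _ ≤ K * (K ^ k * dist a0 a) := mul_le_mul_of_nonneg_left ih.2 hKnn
            _ = K ^ (k + 1) * dist a0 a := by ring
    rw [tendsto_iff_dist_tendsto_zero]
    refine squeeze_zero (fun k => dist_nonneg) (fun k => (hiter k).2) ?_
    have := (tendsto_pow_atTop_nhds_zero_of_lt_one hKnn hK1).mul_const (dist a0 a)
    simpa using this
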